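/- Let G be a countable group and let (S, 0) be a pointed metrizable topological space. If G admits a group homomorphism with nontrivial image into the group Homeo̰₊^{(S,0)}(ℝ, 0), then G admits a group homomorphism with nontrivial image into Homeo₊(ℝ). -/

import Mathlib

open Filter Topology Set

def HomeoPlusReal : Subgroup (Equiv.Perm ℝ) where
  carrier := {f | Continuous f ∧ Continuous f.symm ∧ StrictMono f}
  one_mem' := by
    refine ⟨continuous_id, ?_, fun a b h => h⟩
    exact continuous_id
  mul_mem' := by
    rintro a b ⟨ha1, ha2, ha3⟩ ⟨hb1, hb2, hb3⟩
    refine ⟨?_, ?_, ?_⟩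
    · simpa [Equiv.Perm.coe_mul] using ha1.comp hb1
    · have : Continuous (⇑b.symm ∘ ⇑a.symm) := hb2.comp ha2
      simpa [Equiv.Perm.mul_def, Equiv.symm_trans_apply, Function.comp] using this
    · intro x y h
      simpa [Equiv.Perm.coe_mul] using ha3 (hb3 h)
  inv_mem' := by
    rintro a ⟨ha1, ha2, ha3⟩
    refine ⟨by simpa using ha2, by simpa [Equiv.Perm.inv_def] using ha1, ?_⟩
    intro x y h
    have h2 := ha3.lt_iff_lt (a := a.symm x) (b := a.symm y)
    simp only [Equiv.apply_symm_apply] at h2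
    simpa using h2.mp h

variable (S : Type*) [TopologicalSpace S] (s₀ : S)

/-- Data representing a local homeomorphism `F` of an open neighborhood of
`(0, s₀)` in `ℝ × S` of the form `F (x, s) = (h_s x, s)`, where each `h_s` is a
local orientation-preserving (strictly increasing) homeomorphism of `ℝ`, with
`F (0, s₀) = (0, s₀)`, together with a local inverse `G`. -/
structure ParamLocalHomeo where
  F : ℝ × S → ℝ × S
  G : ℝ × S → ℝ × S
  U : Set (ℝ × S)
  V : Set (ℝ × S)
  isOpen_U : IsOpen U
  isOpen_V : IsOpen V
  mem_U : ((0 : ℝ), s₀) ∈ U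
  mem_V : ((0 : ℝ), s₀) ∈ V
  contF : ContinuousOn F U
  contG : ContinuousOn G V
  mapsF : Set.MapsTo F U V
  mapsG : Set.MapsTo G V U
  leftInv : ∀ p ∈ U, G (F p) = p
  rightInv : ∀ p ∈ V, F (G p) = p
  snd_eq : ∀ p ∈ U, (F p).2 = p.2
  mono : ∀ p ∈ U, ∀ q ∈ U, p.2 = q.2 → p.1 < q.1 → (F p).1 < (F q).1
  fixes : F ((0 : ℝ), s₀) = ((0 : ℝ), s₀)

namespace ParamLocalHomeo

variable {S s₀}

instance setoid : Setoid (ParamLocalHomeo S s₀) where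
  r d e := d.F =ᶠ[nhds ((0 : ℝ), s₀)] e.F
  iseqv := ⟨fun _ => Filter.EventuallyEq.refl _ _,
    fun h => h.symm, fun h h' => h.trans h'⟩

lemma G_fixes (d : ParamLocalHomeo S s₀) : d.G ((0 : ℝ), s₀) = ((0 : ℝ), s₀) := by
  have h := d.leftInv _ d.mem_U
  rw [d.fixes] at h
  exact h

lemma G_snd_eq (d : ParamLocalHomeo S s₀) : ∀ p ∈ d.V, (d.G p).2 = p.2 := by
  intro p hp
  have h := d.snd_eq (d.G p) (d.mapsG hp)
  rw [d.rightInv p hp] at h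
  exact h.symm

def one : ParamLocalHomeo S s₀ where
  F := id
  G := id
  U := Set.univ
  V := Set.univ
  isOpen_U := isOpen_univ
  isOpen_V := isOpen_univ
  mem_U := trivial
  mem_V := trivial
  contF := continuousOn_id
  contG := continuousOn_id
  mapsF := fun _ _ => trivial
  mapsG := fun _ _ => trivial
  leftInv := fun _ _ => rfl
  rightInv := fun _ _ => rfl
  snd_eq := fun _ _ => rfl
  mono := fun _ _ _ _ _ h => h
  fixes := rfl

def comp (d e : ParamLocalHomeo S s₀) : ParamLocalHomeo S s₀ where
  F := d.F ∘ e.F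
  G := e.G ∘ d.G
  U := e.U ∩ e.F ⁻¹' d.U
  V := d.V ∩ d.G ⁻¹' e.V
  isOpen_U := e.contF.isOpen_inter_preimage e.isOpen_U d.isOpen_U
  isOpen_V := d.contG.isOpen_inter_preimage d.isOpen_V e.isOpen_V
  mem_U := ⟨e.mem_U, by simp only [Set.mem_preimage, e.fixes]; exact d.mem_U⟩
  mem_V := ⟨d.mem_V, by simp only [Set.mem_preimage, d.G_fixes]; exact e.mem_V⟩
  contF := d.contF.comp (e.contF.mono Set.inter_subset_left) (fun x hx => hx.2)
  contG := e.contG.comp (d.contG.mono Set.inter_subset_left) (fun x hx => hx.2)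
  mapsF := by
    rintro p ⟨hp1, hp2⟩
    refine ⟨d.mapsF hp2, ?_⟩
    simp only [Set.mem_preimage, Function.comp_apply]
    rw [d.leftInv _ hp2]
    exact e.mapsF hp1
  mapsG := by
    rintro q ⟨hq1, hq2⟩
    refine ⟨e.mapsG hq2, ?_⟩
    simp only [Set.mem_preimage, Function.comp_apply]
    rw [e.rightInv _ hq2]
    exact d.mapsG hq1
  leftInv := by
    rintro p ⟨hp1, hp2⟩
    simp only [Function.comp_apply]
    rw [d.leftInv _ hp2, e.leftInv _ hp1]
  rightInv := by
    rintro q ⟨hq1, hq2⟩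
    simp only [Function.comp_apply]
    rw [e.rightInv _ hq2, d.rightInv _ hq1]
  snd_eq := by
    rintro p ⟨hp1, hp2⟩
    simp only [Function.comp_apply]
    rw [d.snd_eq _ hp2, e.snd_eq _ hp1]
  mono := by
    rintro p ⟨hp1, hp2⟩ q ⟨hq1, hq2⟩ hpq hlt
    refine d.mono _ hp2 _ hq2 ?_ (e.mono _ hp1 _ hq1 hpq hlt)
    rw [e.snd_eq _ hp1, e.snd_eq _ hq1, hpq]
  fixes := by simp only [Function.comp_apply, e.fixes, d.fixes]

def inv (d : ParamLocalHomeo S s₀) : ParamLocalHomeo S s₀ where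
  F := d.G
  G := d.F
  U := d.V
  V := d.U
  isOpen_U := d.isOpen_V
  isOpen_V := d.isOpen_U
  mem_U := d.mem_V
  mem_V := d.mem_U
  contF := d.contG
  contG := d.contF
  mapsF := d.mapsG
  mapsG := d.mapsF
  leftInv := d.rightInv
  rightInv := d.leftInv
  snd_eq := d.G_snd_eq
  mono := by
    intro p hp q hq hpq hlt
    have hGp := d.mapsG hp
    have hGq := d.mapsG hq
    have hsnd : (d.G p).2 = (d.G q).2 := by
      rw [d.G_snd_eq p hp, d.G_snd_eq q hq, hpq]
    rcases lt_trichotomy (d.G p).1 (d.G q).1 with h | h | h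
    · exact h
    · exfalso
      have : d.G p = d.G q := Prod.ext h hsnd
      have : p = q := by rw [← d.rightInv p hp, ← d.rightInv q hq, this]
      exact absurd (congrArg Prod.fst this) (ne_of_lt hlt)
    · exfalso
      have := d.mono _ hGq _ hGp hsnd.symm h
      rw [d.rightInv p hp, d.rightInv q hq] at this
      exact absurd hlt (not_lt.mpr this.le)
  fixes := d.G_fixes

lemma comp_sound {d₁ e₁ d₂ e₂ : ParamLocalHomeo S s₀} (h₁ : d₁ ≈ e₁) (h₂ : d₂ ≈ e₂) :
    comp d₁ d₂ ≈ comp e₁ e₂ := by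
  have hc : ContinuousAt d₂.F ((0 : ℝ), s₀) :=
    d₂.contF.continuousAt (d₂.isOpen_U.mem_nhds d₂.mem_U)
  have ht : Tendsto d₂.F (nhds ((0 : ℝ), s₀)) (nhds ((0 : ℝ), s₀)) := by
    have := hc.tendsto
    rwa [d₂.fixes] at this
  exact (h₁.comp_tendsto ht).trans (h₂.fun_comp e₁.F)

lemma inv_sound {d e : ParamLocalHomeo S s₀} (h : d ≈ e) : inv d ≈ inv e := by
  obtain ⟨s, hs, hseq⟩ := Filter.eventuallyEq_iff_exists_mem.mp h
  obtain ⟨W, hWs, hWopen, hW0⟩ := mem_nhds_iff.mp hs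
  set A : Set (ℝ × S) := d.U ∩ e.U ∩ W with hA
  have hAopen : IsOpen A := (d.isOpen_U.inter e.isOpen_U).inter hWopen
  have hA0 : ((0 : ℝ), s₀) ∈ A := ⟨⟨d.mem_U, e.mem_U⟩, hW0⟩
  have hBopen : IsOpen (d.V ∩ d.G ⁻¹' A) := d.contG.isOpen_inter_preimage d.isOpen_V hAopen
  have hB0 : ((0 : ℝ), s₀) ∈ d.V ∩ d.G ⁻¹' A :=
    ⟨d.mem_V, by simp only [Set.mem_preimage, d.G_fixes]; exact hA0⟩
  apply Filter.eventuallyEq_of_mem (hBopen.mem_nhds hB0)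
  rintro q ⟨hq1, hq2⟩
  simp only [Set.mem_preimage] at hq2
  obtain ⟨⟨hxU, hxU'⟩, hxW⟩ := hq2
  show d.G q = e.G q
  have h1 : d.F (d.G q) = q := d.rightInv q hq1
  have h2 : e.F (d.G q) = q := by rw [← hseq (hWs hxW)]; exact h1
  calc d.G q = e.G (e.F (d.G q)) := (e.leftInv _ hxU').symm
    _ = e.G q := by rw [h2]

end ParamLocalHomeo

/-- The group `Homeo̰₊^{(S,s₀)}(ℝ, 0)` of germs at `(0, s₀)` of local
homeomorphisms of `ℝ × S` of the form `(x, s) ↦ (h_s x, s)`, fixing `(0, s₀)`,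
under composition of germs. -/
def ParamGermHomeoPlus : Type _ := Quotient (ParamLocalHomeo.setoid (S := S) (s₀ := s₀))

namespace ParamGermHomeoPlus

instance : Group (ParamGermHomeoPlus S s₀) where
  mul := Quotient.map₂ ParamLocalHomeo.comp
    (fun _ _ h₁ _ _ h₂ => ParamLocalHomeo.comp_sound h₁ h₂)
  one := ⟦ParamLocalHomeo.one⟧
  inv := Quotient.map ParamLocalHomeo.inv (fun _ _ h => ParamLocalHomeo.inv_sound h)
  mul_assoc a b c := by
    induction a using Quotient.ind
    induction b using Quotient.ind
    induction c using Quotient.ind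
    exact Quotient.sound (Filter.EventuallyEq.refl _ _)
  one_mul a := by
    induction a using Quotient.ind
    exact Quotient.sound (Filter.EventuallyEq.refl _ _)
  mul_one a := by
    induction a using Quotient.ind
    exact Quotient.sound (Filter.EventuallyEq.refl _ _)
  inv_mul_cancel a := by
    induction a using Quotient.ind
    rename_i d
    apply Quotient.sound
    apply Filter.eventuallyEq_of_mem (d.isOpen_U.mem_nhds d.mem_U)
    intro p hp
    exact d.leftInv p hp

end ParamGermHomeoPlus

section RatExt


noncomputable def rext (f : ℚ ≃o ℚ) (x : ℝ) : ℝ :=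
  sSup ((fun q : ℚ => ((f q : ℚ) : ℝ)) '' {q : ℚ | (q : ℝ) < x})

lemma rext_nonempty (f : ℚ ≃o ℚ) (x : ℝ) :
    ((fun q : ℚ => ((f q : ℚ) : ℝ)) '' {q : ℚ | (q : ℝ) < x}).Nonempty := by
  obtain ⟨q, hq⟩ := exists_rat_lt x
  exact ⟨_, ⟨q, hq, rfl⟩⟩

lemma rext_bddAbove (f : ℚ ≃o ℚ) (x : ℝ) :
    BddAbove ((fun q : ℚ => ((f q : ℚ) : ℝ)) '' {q : ℚ | (q : ℝ) < x}) := by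
  obtain ⟨r, hr⟩ := exists_rat_gt x
  refine ⟨((f r : ℚ) : ℝ), ?_⟩
  rintro y ⟨q, hq, rfl⟩
  have hqr : q < r := by exact_mod_cast lt_trans hq hr
  show ((f q : ℚ) : ℝ) ≤ _
  exact_mod_cast (f.lt_iff_lt.mpr hqr).le

lemma le_rext (f : ℚ ≃o ℚ) {x : ℝ} {q : ℚ} (h : (q : ℝ) < x) :
    ((f q : ℚ) : ℝ) ≤ rext f x :=
  le_csSup (rext_bddAbove f x) ⟨q, h, rfl⟩

lemma rext_le (f : ℚ ≃o ℚ) {x y : ℝ} (h : ∀ q : ℚ, (q : ℝ) < x → ((f q : ℚ) : ℝ) ≤ y) :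
    rext f x ≤ y :=
  csSup_le (rext_nonempty f x) (by rintro _ ⟨q, hq, rfl⟩; exact h q hq)

lemma rext_ratCast (f : ℚ ≃o ℚ) (q₀ : ℚ) : rext f ((q₀ : ℝ)) = ((f q₀ : ℚ) : ℝ) := by
  apply le_antisymm
  · apply rext_le
    intro q hq
    have : q < q₀ := by exact_mod_cast hq
    exact_mod_cast (f.lt_iff_lt.mpr this).le
  · refine le_of_forall_lt fun y hy => ?_
    obtain ⟨r, hyr, hr⟩ := exists_rat_btwn hy
    have hr' : r < f q₀ := by exact_mod_cast hr
    have h1 : f.symm r < q₀ := by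
      rw [← f.lt_iff_lt, f.apply_symm_apply]; exact hr'
    have h2 : ((f (f.symm r) : ℚ) : ℝ) ≤ rext f (q₀ : ℝ) :=
      le_rext f (by exact_mod_cast h1)
    rw [f.apply_symm_apply] at h2
    exact lt_of_lt_of_le hyr h2

lemma rext_strictMono (f : ℚ ≃o ℚ) : StrictMono (rext f) := by
  intro x y hxy
  obtain ⟨q, hq1, hq2⟩ := exists_rat_btwn hxy
  obtain ⟨q', h1', h2'⟩ := exists_rat_btwn hq2
  have hqq' : q < q' := by exact_mod_cast h1'
  have hx_le : rext f x ≤ ((f q : ℚ) : ℝ) := by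
    apply rext_le
    intro r hr
    have : r < q := by exact_mod_cast lt_trans hr hq1
    exact_mod_cast (f.lt_iff_lt.mpr this).le
  have hmid : ((f q : ℚ) : ℝ) < ((f q' : ℚ) : ℝ) := by
    exact_mod_cast f.lt_iff_lt.mpr hqq'
  exact lt_of_le_of_lt hx_le (lt_of_lt_of_le hmid (le_rext f h2'))

lemma rext_rightInv (f : ℚ ≃o ℚ) (x : ℝ) : rext f (rext f.symm x) = x := by
  apply le_antisymm
  · apply rext_le
    intro q hq
    obtain ⟨y, ⟨r, hrx, rfl⟩, hqy⟩ := exists_lt_of_lt_csSup (rext_nonempty f.symm x) hq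
    have hqy' : ((q : ℚ) : ℝ) < ((f.symm r : ℚ) : ℝ) := hqy
    have h1 : q < f.symm r := by exact_mod_cast hqy'
    have h2 : f q < r := by rw [← f.apply_symm_apply r]; exact f.lt_iff_lt.mpr h1
    exact le_of_lt (lt_trans (by exact_mod_cast h2) hrx)
  · refine le_of_forall_lt fun y hy => ?_
    obtain ⟨r, h1, h2⟩ := exists_rat_btwn hy
    obtain ⟨r', h3, h4⟩ := exists_rat_btwn h2
    have hrr' : f.symm r < f.symm r' := f.symm.lt_iff_lt.mpr (by exact_mod_cast h3)
    have hmem : ((f.symm r' : ℚ) : ℝ) ≤ rext f.symm x := le_rext f.symm h4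
    have h5 : ((f.symm r : ℚ) : ℝ) < rext f.symm x :=
      lt_of_lt_of_le (by exact_mod_cast hrr') hmem
    have h6 : ((f (f.symm r) : ℚ) : ℝ) ≤ rext f (rext f.symm x) := le_rext f h5
    rw [f.apply_symm_apply] at h6
    exact lt_of_lt_of_le h1 h6

lemma rext_surjective (f : ℚ ≃o ℚ) : Function.Surjective (rext f) :=
  fun x => ⟨rext f.symm x, rext_rightInv f x⟩

noncomputable def rIso (f : ℚ ≃o ℚ) : ℝ ≃o ℝ :=
  StrictMono.orderIsoOfSurjective (rext f) (rext_strictMono f) (rext_surjective f)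

lemma rIso_apply (f : ℚ ≃o ℚ) (x : ℝ) : rIso f x = rext f x := rfl

lemma rIso_ratCast (f : ℚ ≃o ℚ) (q : ℚ) : rIso f ((q : ℝ)) = ((f q : ℚ) : ℝ) :=
  rext_ratCast f q

lemma rIso_unique (f : ℚ ≃o ℚ) (e : ℝ ≃o ℝ) (h : ∀ q : ℚ, e ((q : ℝ)) = ((f q : ℚ) : ℝ))
    (x : ℝ) : rIso f x = e x := by
  have h1 : Continuous (rIso f) := (rIso f).continuous
  have h2 : Continuous e := e.continuous
  have h3 : (⇑(rIso f)) = ⇑e := by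
    apply Continuous.ext_on (Rat.denseRange_cast (𝕜 := ℝ)) h1 h2
    rintro _ ⟨q, rfl⟩
    rw [h q]
    exact rIso_ratCast f q
  exact congrFun h3 x

end RatExt
section GermPart

variable {G : Type*} [Group G] {S' : Type*} [TopologicalSpace S'] {t₀ : S'}

/-- A choice of representative for each germ in the image of `φ`. -/
noncomputable def pick (φ : G →* ParamGermHomeoPlus S' t₀) (g : G) : ParamLocalHomeo S' t₀ :=
  (φ g).out

def toGerm (a : ParamLocalHomeo S' t₀) : ParamGermHomeoPlus S' t₀ := ⟦a⟧

lemma mk_mul (a b : ParamLocalHomeo S' t₀) :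
    toGerm a * toGerm b = toGerm (a.comp b) := rfl

lemma toGerm_pick (φ : G →* ParamGermHomeoPlus S' t₀) (g : G) :
    toGerm (pick φ g) = φ g := Quotient.out_eq _

lemma one_eq_mk : (1 : ParamGermHomeoPlus S' t₀) = toGerm ParamLocalHomeo.one := rfl

lemma pick_germ_mul (φ : G →* ParamGermHomeoPlus S' t₀) (g h : G) :
    (pick φ (g * h)).F =ᶠ[nhds ((0 : ℝ), t₀)] ((pick φ g).F ∘ (pick φ h).F) := by
  have h1 : toGerm (pick φ (g * h)) = toGerm ((pick φ g).comp (pick φ h)) := by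
    rw [← mk_mul, toGerm_pick, toGerm_pick, toGerm_pick]
    exact map_mul φ g h
  exact Quotient.exact h1

lemma pick_one (φ : G →* ParamGermHomeoPlus S' t₀) :
    (pick φ 1).F =ᶠ[nhds ((0 : ℝ), t₀)] id := by
  have h1 : toGerm (pick φ 1) = toGerm ParamLocalHomeo.one := by
    rw [← one_eq_mk, toGerm_pick]
    exact map_one φ
  exact Quotient.exact h1

end GermPart

/-- A sequence converging to the base point together with an ultrafilter. -/
structure SeqSetup (S' : Type*) [TopologicalSpace S'] (t₀ : S') where
  p : ℕ → ℝ × S'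
  tendsto : Filter.Tendsto p Filter.atTop (nhds ((0 : ℝ), t₀))
  U : Ultrafilter ℕ
  hU : (U : Filter ℕ) ≤ (Filter.atTop : Filter ℕ)

section SetupPart

variable {G : Type*} [Group G] {S' : Type*} [TopologicalSpace S'] {t₀ : S'}
variable (φ : G →* ParamGermHomeoPlus S' t₀) (σ : SeqSetup S' t₀)

noncomputable def iota (g : G) : Filter.Germ (σ.U : Filter ℕ) ℝ :=
  ↑(fun k => ((pick φ g).F (σ.p k)).1)

lemma ev {P : ℝ × S' → Prop} (hP : ∀ᶠ q in nhds ((0 : ℝ), t₀), P q) :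
    ∀ᶠ k in (σ.U : Filter ℕ), P (σ.p k) :=
  (σ.tendsto.eventually hP).filter_mono σ.hU

lemma memU (g : G) : ∀ᶠ k in (σ.U : Filter ℕ), σ.p k ∈ (pick φ g).U :=
  ev σ ((pick φ g).isOpen_U.eventually_mem (pick φ g).mem_U)

lemma tendstoF (g : G) :
    Filter.Tendsto (fun k => (pick φ g).F (σ.p k)) (σ.U : Filter ℕ) (nhds ((0 : ℝ), t₀)) := by
  have hc : ContinuousAt (pick φ g).F ((0 : ℝ), t₀) :=
    (pick φ g).contF.continuousAt ((pick φ g).isOpen_U.mem_nhds (pick φ g).mem_U)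
  have h2 := hc.tendsto
  rw [(pick φ g).fixes] at h2
  exact h2.comp (σ.tendsto.mono_left σ.hU)

lemma memU2 (g f : G) :
    ∀ᶠ k in (σ.U : Filter ℕ), (pick φ g).F (σ.p k) ∈ (pick φ f).U :=
  (tendstoF φ σ g).eventually ((pick φ f).isOpen_U.eventually_mem (pick φ f).mem_U)

lemma comp_ev (g h : G) :
    ∀ᶠ k in (σ.U : Filter ℕ),
      (pick φ (g * h)).F (σ.p k) = (pick φ g).F ((pick φ h).F (σ.p k)) :=
  ev σ (pick_germ_mul φ g h)

lemma smul_le (f : G) {g h : G} (hle : iota φ σ g ≤ iota φ σ h) :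
    iota φ σ (f * g) ≤ iota φ σ (f * h) := by
  rw [iota, iota, Filter.Germ.coe_le] at hle ⊢
  filter_upwards [hle, comp_ev φ σ f g, comp_ev φ σ f h, memU φ σ g, memU φ σ h,
    memU2 φ σ g f, memU2 φ σ h f] with k h1 h2 h3 h4 h5 h6 h7
  rw [h2, h3]
  have hsnd : ((pick φ g).F (σ.p k)).2 = ((pick φ h).F (σ.p k)).2 := by
    rw [(pick φ g).snd_eq _ h4, (pick φ h).snd_eq _ h5]
  rcases eq_or_lt_of_le h1 with he | hl
  · rw [Prod.ext he hsnd]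
  · exact ((pick φ f).mono _ h6 _ h7 hsnd hl).le

lemma smul_le_iff (f : G) {g h : G} :
    iota φ σ (f * g) ≤ iota φ σ (f * h) ↔ iota φ σ g ≤ iota φ σ h :=
  ⟨fun hle => by simpa [inv_mul_cancel_left] using smul_le φ σ f⁻¹ hle, smul_le φ σ f⟩

lemma smul_eq (f : G) {g h : G} (he : iota φ σ g = iota φ σ h) :
    iota φ σ (f * g) = iota φ σ (f * h) :=
  le_antisymm (smul_le φ σ f he.le) (smul_le φ σ f he.ge)

end SetupPart
section ActPart

variable {G : Type*} [Group G] {S' : Type*} [TopologicalSpace S'] {t₀ : S'}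
variable (φ : G →* ParamGermHomeoPlus S' t₀) (σ : SeqSetup S' t₀)

noncomputable def act (f : G) (ω : Set.range (iota φ σ)) : Set.range (iota φ σ) :=
  ⟨iota φ σ (f * ω.2.choose), Set.mem_range_self _⟩

lemma act_coe (f : G) (ω : Set.range (iota φ σ)) :
    (act φ σ f ω : Filter.Germ (σ.U : Filter ℕ) ℝ) = iota φ σ (f * ω.2.choose) := rfl

lemma act_le_iff (f : G) {ω ω' : Set.range (iota φ σ)} :
    act φ σ f ω ≤ act φ σ f ω' ↔ ω ≤ ω' := by
  have h1 : (act φ σ f ω ≤ act φ σ f ω') ↔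
      iota φ σ (f * ω.2.choose) ≤ iota φ σ (f * ω'.2.choose) := Subtype.coe_le_coe.symm
  rw [h1, smul_le_iff, show iota φ σ ω.2.choose = (ω : Filter.Germ (σ.U : Filter ℕ) ℝ)
    from ω.2.choose_spec, show iota φ σ ω'.2.choose = (ω' : Filter.Germ (σ.U : Filter ℕ) ℝ)
    from ω'.2.choose_spec]
  exact Subtype.coe_le_coe

lemma act_comp (f f' : G) (ω : Set.range (iota φ σ)) :
    act φ σ f (act φ σ f' ω) = act φ σ (f * f') ω := by
  apply Subtype.ext
  show iota φ σ (f * (act φ σ f' ω).2.choose) = iota φ σ ((f * f') * ω.2.choose)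
  rw [mul_assoc]
  exact smul_eq φ σ f ((act φ σ f' ω).2.choose_spec)

lemma act_one (ω : Set.range (iota φ σ)) : act φ σ 1 ω = ω := by
  apply Subtype.ext
  show iota φ σ (1 * ω.2.choose) = _
  rw [one_mul]
  exact ω.2.choose_spec

lemma act_eq_iff (f : G) {ω ω' : Set.range (iota φ σ)} :
    act φ σ f ω = act φ σ f ω' ↔ ω = ω' := by
  constructor
  · intro h
    have := congrArg (act φ σ f⁻¹) h
    rwa [act_comp, act_comp, inv_mul_cancel, act_one, act_one] at this
  · intro h; rw [h]

lemma act_lt_iff (f : G) {ω ω' : Set.range (iota φ σ)} :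
    act φ σ f ω < act φ σ f ω' ↔ ω < ω' := by
  rw [lt_iff_le_and_ne, lt_iff_le_and_ne, act_le_iff, Ne, act_eq_iff]

noncomputable def lexAct (f : G) :
    ((Set.range (iota φ σ)) ×ₗ ℚ) ≃o ((Set.range (iota φ σ)) ×ₗ ℚ) where
  toEquiv :=
    { toFun := fun x => toLex (act φ σ f (ofLex x).1, (ofLex x).2)
      invFun := fun x => toLex (act φ σ f⁻¹ (ofLex x).1, (ofLex x).2)
      left_inv := by
        intro x
        show toLex (act φ σ f⁻¹ (act φ σ f (ofLex x).1), (ofLex x).2) = x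
        rw [act_comp, inv_mul_cancel, act_one]
        exact toLex_ofLex x
      right_inv := by
        intro x
        show toLex (act φ σ f (act φ σ f⁻¹ (ofLex x).1), (ofLex x).2) = x
        rw [act_comp, mul_inv_cancel, act_one]
        exact toLex_ofLex x }
  map_rel_iff' := by
    intro a b
    show toLex (act φ σ f (ofLex a).1, (ofLex a).2) ≤ toLex (act φ σ f (ofLex b).1, (ofLex b).2)
      ↔ a ≤ b
    refine Iff.trans Prod.Lex.le_iff (Iff.trans ?_ (Prod.Lex.le_iff (x := a) (y := b)).symm)
    simp only [ofLex_toLex, act_lt_iff, act_eq_iff]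

lemma lexAct_apply (f : G) (x : (Set.range (iota φ σ)) ×ₗ ℚ) :
    lexAct φ σ f x = toLex (act φ σ f (ofLex x).1, (ofLex x).2) := rfl

lemma lexAct_comp (f f' : G) (x : (Set.range (iota φ σ)) ×ₗ ℚ) :
    lexAct φ σ f (lexAct φ σ f' x) = lexAct φ σ (f * f') x := by
  rw [lexAct_apply, lexAct_apply, lexAct_apply]
  show toLex (act φ σ f (act φ σ f' (ofLex x).1), (ofLex x).2) = _
  rw [act_comp]

lemma lexAct_one (x : (Set.range (iota φ σ)) ×ₗ ℚ) : lexAct φ σ 1 x = x := by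
  rw [lexAct_apply, act_one]
  exact toLex_ofLex x

noncomputable def conjQ (c : ((Set.range (iota φ σ)) ×ₗ ℚ) ≃o ℚ) (f : G) : ℚ ≃o ℚ :=
  (c.symm.trans ((lexAct φ σ f).trans c))

lemma conjQ_apply (c : ((Set.range (iota φ σ)) ×ₗ ℚ) ≃o ℚ) (f : G) (q : ℚ) :
    conjQ φ σ c f q = c (lexAct φ σ f (c.symm q)) := rfl

lemma conjQ_comp (c : ((Set.range (iota φ σ)) ×ₗ ℚ) ≃o ℚ) (f f' : G) (q : ℚ) :
    conjQ φ σ c f (conjQ φ σ c f' q) = conjQ φ σ c (f * f') q := by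
  rw [conjQ_apply, conjQ_apply, conjQ_apply, c.symm_apply_apply, lexAct_comp]

lemma conjQ_one (c : ((Set.range (iota φ σ)) ×ₗ ℚ) ≃o ℚ) (q : ℚ) :
    conjQ φ σ c 1 q = q := by
  rw [conjQ_apply, lexAct_one, c.apply_symm_apply]

noncomputable def psiFun (c : ((Set.range (iota φ σ)) ×ₗ ℚ) ≃o ℚ) (g : G) : HomeoPlusReal :=
  ⟨(rIso (conjQ φ σ c g)).toEquiv,
    (rIso (conjQ φ σ c g)).continuous,
    (rIso (conjQ φ σ c g)).symm.continuous,
    (rIso (conjQ φ σ c g)).strictMono⟩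

lemma psiFun_coe (c : ((Set.range (iota φ σ)) ×ₗ ℚ) ≃o ℚ) (g : G) (x : ℝ) :
    ((psiFun φ σ c g : Equiv.Perm ℝ) : ℝ → ℝ) x = rIso (conjQ φ σ c g) x := rfl

lemma psiFun_mul (c : ((Set.range (iota φ σ)) ×ₗ ℚ) ≃o ℚ) (g h : G) :
    psiFun φ σ c (g * h) = psiFun φ σ c g * psiFun φ σ c h := by
  apply Subtype.ext
  apply Equiv.ext
  intro x
  show rIso (conjQ φ σ c (g * h)) x = rIso (conjQ φ σ c g) (rIso (conjQ φ σ c h) x)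
  exact rIso_unique (conjQ φ σ c (g * h))
    ((rIso (conjQ φ σ c h)).trans (rIso (conjQ φ σ c g)))
    (fun q => by
      show rIso (conjQ φ σ c g) (rIso (conjQ φ σ c h) (q : ℝ)) = _
      rw [rIso_ratCast, rIso_ratCast, conjQ_comp]) x

end ActPart

section LexOrderFacts

variable {α : Type*} [LinearOrder α]

lemma lex_denselyOrdered : DenselyOrdered (α ×ₗ ℚ) := by
  constructor
  intro a b hab
  rcases Prod.Lex.lt_iff.mp hab with h | ⟨h1, h2⟩
  · refine ⟨toLex ((ofLex a).1, (ofLex a).2 + 1), ?_, ?_⟩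
    · exact Prod.Lex.lt_iff.mpr (Or.inr ⟨rfl, lt_add_one _⟩)
    · exact Prod.Lex.lt_iff.mpr (Or.inl h)
  · obtain ⟨q, hq1, hq2⟩ := exists_between h2
    refine ⟨toLex ((ofLex a).1, q), ?_, ?_⟩
    · exact Prod.Lex.lt_iff.mpr (Or.inr ⟨rfl, hq1⟩)
    · exact Prod.Lex.lt_iff.mpr (Or.inr ⟨h1, hq2⟩)

lemma lex_noMaxOrder : NoMaxOrder (α ×ₗ ℚ) := by
  constructor
  intro a
  exact ⟨toLex ((ofLex a).1, (ofLex a).2 + 1),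
    Prod.Lex.lt_iff.mpr (Or.inr ⟨rfl, lt_add_one _⟩)⟩

lemma lex_noMinOrder : NoMinOrder (α ×ₗ ℚ) := by
  constructor
  intro a
  refine ⟨toLex ((ofLex a).1, (ofLex a).2 - 1), ?_⟩
  exact Prod.Lex.lt_iff.mpr (Or.inr ⟨rfl, sub_one_lt _⟩)

end LexOrderFacts

lemma exists_seqSetup {G : Type*} [Group G] {S' : Type*} [TopologicalSpace S']
    [TopologicalSpace.MetrizableSpace S'] {t₀ : S'} (φ : G →* ParamGermHomeoPlus S' t₀)
    (g₀ : G) (hg : φ g₀ ≠ 1) :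
    ∃ σ : SeqSetup S' t₀, ∀ k, (pick φ g₀).F (σ.p k) ≠ σ.p k := by
  obtain ⟨b, hb⟩ := (nhds ((0 : ℝ), t₀)).exists_antitone_basis
  have key : ∀ n, ∃ q, q ∈ b n ∧ (pick φ g₀).F q ≠ q := by
    intro n
    by_contra hcon
    push_neg at hcon
    apply hg
    have h1 : toGerm (pick φ g₀) = toGerm ParamLocalHomeo.one := by
      apply Quotient.sound
      exact Filter.eventuallyEq_of_mem (hb.1.mem_of_mem trivial) hcon
    rw [toGerm_pick] at h1
    rw [h1, one_eq_mk]
  choose p hp1 hp2 using key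
  exact ⟨⟨p, hb.tendsto hp1, Ultrafilter.of Filter.atTop, Ultrafilter.of_le _⟩, hp2⟩
/-- If a countable group `G` admits a homomorphism with nontrivial image into
`Homeo̰₊^{(S,s₀)}(ℝ, 0)` for some pointed metrizable space `(S, s₀)`, then it
admits a homomorphism with nontrivial image into `Homeo₊(ℝ)`. -/
theorem exists_nontrivial_hom_homeoPlus_of_paramGerm {G : Type*} [Group G]
    [Countable G] {S : Type*} [TopologicalSpace S]
    [TopologicalSpace.MetrizableSpace S] (s₀ : S)
    (h : ∃ φ : G →* ParamGermHomeoPlus S s₀, ∃ g : G, φ g ≠ 1) :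
    ∃ ψ : G →* HomeoPlusReal, ∃ g : G, ψ g ≠ 1 := by
  obtain ⟨φ, g₀, hg₀⟩ := h
  obtain ⟨σ, hσ⟩ := exists_seqSetup φ g₀ hg₀
  have hne : iota φ σ g₀ ≠ iota φ σ 1 := by
    intro hcon
    rw [iota, iota, Filter.Germ.coe_eq] at hcon
    have h1 : ∀ᶠ k in (σ.U : Filter ℕ), (pick φ 1).F (σ.p k) = σ.p k := ev σ (pick_one φ)
    obtain ⟨k, hk1, hk2, hk3⟩ := (hcon.and (h1.and (memU φ σ g₀))).exists
    apply hσ k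
    apply Prod.ext
    · simp only [] at hk1
      rw [hk1, hk2]
    · exact (pick φ g₀).snd_eq _ hk3
  haveI : Countable (Set.range (iota φ σ)) := (Set.countable_range _).to_subtype
  haveI : Countable ((Set.range (iota φ σ)) ×ₗ ℚ) := Countable.of_equiv _ toLex
  haveI := lex_denselyOrdered (α := ↥(Set.range (iota φ σ)))
  haveI := lex_noMaxOrder (α := ↥(Set.range (iota φ σ)))
  haveI := lex_noMinOrder (α := ↥(Set.range (iota φ σ)))
  haveI : Nonempty ((Set.range (iota φ σ)) ×ₗ ℚ) :=
    ⟨toLex (⟨iota φ σ 1, Set.mem_range_self 1⟩, 0)⟩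
  obtain ⟨c⟩ := Order.iso_of_countable_dense (α := (Set.range (iota φ σ)) ×ₗ ℚ) (β := ℚ)
  refine ⟨MonoidHom.mk' (psiFun φ σ c) (psiFun_mul φ σ c), g₀, ?_⟩
  intro hcon
  set ω₀ : Set.range (iota φ σ) := ⟨iota φ σ 1, Set.mem_range_self 1⟩ with hω₀
  set l₀ := toLex (ω₀, (0 : ℚ)) with hl₀
  have h1 : rIso (conjQ φ σ c g₀) ((c l₀ : ℚ) : ℝ) = ((c l₀ : ℚ) : ℝ) := by
    have h2 := congrArg (fun (e : HomeoPlusReal) => (e : Equiv.Perm ℝ) ((c l₀ : ℚ) : ℝ)) hcon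
    exact h2
  rw [rIso_ratCast] at h1
  have h2 : conjQ φ σ c g₀ (c l₀) = c l₀ := by exact_mod_cast h1
  rw [conjQ_apply, c.symm_apply_apply] at h2
  have h3 : lexAct φ σ g₀ l₀ = l₀ := c.injective h2
  rw [lexAct_apply] at h3
  have h4 : act φ σ g₀ ω₀ = ω₀ := congrArg (fun x => (ofLex x).1) h3
  apply hne
  have h5 : iota φ σ (g₀ * ω₀.2.choose) = iota φ σ 1 := congrArg Subtype.val h4
  have h6 : iota φ σ (g₀ * ω₀.2.choose) = iota φ σ (g₀ * 1) :=
    smul_eq φ σ g₀ ω₀.2.choose_spec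
  rw [mul_one] at h6
  rw [← h6, h5]
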